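/- arXiv:2309.04045 — 3 statements merged into one kernel-verified Lean document; each statement's English description precedes it below -/
import Mathlib

section
/- For the Kaczmarz update z = x + ((t_j - ⟨p_j, x⟩)⁺ / ‖p_j‖²) · p_j, if x̂ satisfies ⟨p_j, x̂⟩ ≥ t_j, then ‖z - x̂‖² ≤ ‖x - x̂‖² - ((t_j - ⟨p_j, x⟩)⁺)² / ‖p_j‖². -/
open scoped RealInnerProductSpace

/-- Kaczmarz update for an inequality constraint: squared-distance decrease toward
any feasible point `x̂` with `⟪p, x̂⟫ ≥ t`. -/
theorem kaczmarz_update_sq_decrease (n : ℕ) (p : EuclideanSpace ℝ (Fin n))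
    (hp : p ≠ 0) (t : ℝ) (x xhat : EuclideanSpace ℝ (Fin n))
    (hfeas : ⟪p, xhat⟫ ≥ t)
    (z : EuclideanSpace ℝ (Fin n))
    (hz : z = x + ((max (t - ⟪p, x⟫) 0) / ‖p‖ ^ 2) • p) :
    ‖z - xhat‖ ^ 2 ≤ ‖x - xhat‖ ^ 2 - (max (t - ⟪p, x⟫) 0) ^ 2 / ‖p‖ ^ 2 := by
  set m := max (t - ⟪p, x⟫) 0 with hm
  have hpn : (0:ℝ) < ‖p‖ ^ 2 := by
    have := norm_pos_iff.mpr hp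
    positivity
  have hm0 : 0 ≤ m := le_max_right _ _
  have hz' : z - xhat = (x - xhat) + (m / ‖p‖ ^ 2) • p := by
    rw [hz]; abel
  have hkey : m * (t - ⟪p, x⟫) = m ^ 2 := by
    rcases max_cases (t - ⟪p, x⟫) 0 with ⟨h1, h2⟩ | ⟨h1, h2⟩ <;> rw [← hm] at h1 <;> nlinarith
  rw [hz', norm_add_sq_real, norm_smul, real_inner_smul_right]
  have hip : ⟪x - xhat, p⟫ = ⟪p, x⟫ - ⟪p, xhat⟫ := by
    rw [real_inner_comm, inner_sub_right]
  have hns : (‖(m / ‖p‖ ^ 2 : ℝ)‖ * ‖p‖) ^ 2 = m ^ 2 / ‖p‖ ^ 2 := by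
    rw [Real.norm_eq_abs, mul_pow, sq_abs, div_pow]
    field_simp
  rw [hns, hip]
  have h2 : m * (⟪p, x⟫ - ⟪p, xhat⟫) ≤ -(m ^ 2) := by nlinarith
  have hinv : (0:ℝ) < (‖p‖ ^ 2)⁻¹ := inv_pos.mpr hpn
  simp only [div_eq_mul_inv]
  nlinarith [mul_le_mul_of_nonneg_right h2 hinv.le]
end

section
/- The Kaczmarz update for an inequality constraint is a contraction toward any feasible point: if ⟨p, x̂⟩ ≥ t and z = x + ((t - ⟨p, x⟩)⁺ / ‖p‖²) p, then ‖z - x̂‖ ≤ ‖x - x̂‖. -/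
open scoped RealInnerProductSpace

/-- The Kaczmarz update for an inequality constraint is a contraction toward
any feasible point. -/
theorem kaczmarz_update_contraction (n : ℕ) (p : EuclideanSpace ℝ (Fin n))
    (hp : p ≠ 0) (t : ℝ) (x xhat : EuclideanSpace ℝ (Fin n))
    (hfeas : ⟪p, xhat⟫ ≥ t)
    (z : EuclideanSpace ℝ (Fin n))
    (hz : z = x + ((max (t - ⟪p, x⟫) 0) / ‖p‖ ^ 2) • p) :
    ‖z - xhat‖ ≤ ‖x - xhat‖ := by
  have hpn : (0:ℝ) < ‖p‖ ^ 2 := by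
    have := norm_pos_iff.mpr hp
    positivity
  set c : ℝ := max (t - ⟪p, x⟫) 0 / ‖p‖ ^ 2 with hc
  have hzx : z - xhat = (x - xhat) + c • p := by rw [hz]; abel
  have hkey : 2 * c * ⟪p, x - xhat⟫ + c ^ 2 * ‖p‖ ^ 2 ≤ 0 := by
    rcases le_or_gt (t - ⟪p, x⟫) 0 with h | h
    · have : c = 0 := by rw [hc, max_eq_right h, zero_div]
      simp only [this]; norm_num
    · have hm : max (t - ⟪p, x⟫) 0 = t - ⟪p, x⟫ := max_eq_left h.le
      have hcpos : 0 < c := by rw [hc, hm]; positivity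
      have hip : ⟪p, x - xhat⟫ ≤ -(c * ‖p‖ ^ 2) := by
        rw [inner_sub_right, hc, hm, div_mul_cancel₀ _ hpn.ne']
        linarith
      nlinarith
  have hsq : ‖z - xhat‖ ^ 2 ≤ ‖x - xhat‖ ^ 2 := by
    rw [hzx, @norm_add_sq_real, inner_smul_right, norm_smul, mul_pow]
    have : ‖c‖ ^ 2 = c ^ 2 := sq_abs c
    rw [this]
    have h2 : c * ⟪x - xhat, p⟫ = c * ⟪p, x - xhat⟫ := by rw [real_inner_comm]
    linarith [h2]
  nlinarith [hsq, norm_nonneg (z - xhat), norm_nonneg (x - xhat)]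
end

section
/- For matrices X, X' with ‖X‖_F ≤ 1, ‖X'‖_F ≤ 1, and their augmentations X̃ = [[X,0],[0,1]], X̃' = [[X',0],[0,1]] (which satisfy ‖X̃‖_F, ‖X̃'‖_F ≥ 1), one has ‖X - X'‖_F ≤ 2 ‖X̃/‖X̃‖_F - X̃'/‖X̃'‖_F‖_F. -/
/-- The Frobenius norm of a real matrix. -/
noncomputable def frob {m n : Type*} [Fintype m] [Fintype n]
    (X : Matrix m n ℝ) : ℝ := Real.sqrt (∑ i, ∑ j, (X i j) ^ 2)

noncomputable def toE {m n : Type*} [Fintype m] [Fintype n] (X : Matrix m n ℝ) :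
    EuclideanSpace ℝ (m × n) := (WithLp.equiv 2 _).symm fun p => X p.1 p.2

lemma frob_eq {m n : Type*} [Fintype m] [Fintype n] (X : Matrix m n ℝ) :
    frob X = ‖toE X‖ := by
  rw [EuclideanSpace.norm_eq, frob, Fintype.sum_prod_type]
  simp [toE, Real.norm_eq_abs, sq_abs]

lemma frob_nonneg {m n : Type*} [Fintype m] [Fintype n] (X : Matrix m n ℝ) :
    0 ≤ frob X := Real.sqrt_nonneg _

lemma frob_add_le {m n : Type*} [Fintype m] [Fintype n] (A B : Matrix m n ℝ) :
    frob (A + B) ≤ frob A + frob B := by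
  have h : toE (A + B) = toE A + toE B := rfl
  rw [frob_eq, frob_eq, frob_eq, h]
  exact norm_add_le _ _

lemma frob_smul {m n : Type*} [Fintype m] [Fintype n] (c : ℝ) (A : Matrix m n ℝ) :
    frob (c • A) = |c| * frob A := by
  have h : toE (c • A) = c • toE A := rfl
  rw [frob_eq, frob_eq, h, norm_smul, Real.norm_eq_abs]

lemma frob_sq {m n : Type*} [Fintype m] [Fintype n] (X : Matrix m n ℝ) :
    frob X ^ 2 = ∑ i, ∑ j, (X i j) ^ 2 := by
  rw [frob, Real.sq_sqrt (by positivity)]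

lemma frob_fromBlocks_sq {n₁ n₂ : ℕ} (A : Matrix (Fin n₁) (Fin n₂) ℝ)
    (D : Matrix (Fin 1) (Fin 1) ℝ) :
    frob (Matrix.fromBlocks A 0 0 D) ^ 2 = frob A ^ 2 + frob D ^ 2 := by
  rw [frob_sq, frob_sq, frob_sq, Fintype.sum_sum_type]
  simp [Fintype.sum_sum_type]

lemma frob_one_one : frob (1 : Matrix (Fin 1) (Fin 1) ℝ) = 1 := by
  simp [frob, Matrix.one_apply]

lemma arith_key (a s t c F : ℝ) (ha0 : 0 ≤ a) (haU : a ^ 2 ≤ 2)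
    (hs0 : 0 ≤ s) (ht0 : 0 ≤ t) (hc0 : 0 ≤ c) (hc1 : c ≤ 1)
    (hF0 : 0 ≤ F) (hF2 : F ^ 2 = s ^ 2 + t ^ 2) :
    a * s + a * t * c ≤ 2 * F := by
  have h1' : a * s + a * t * c ≤ a * (s + t) := by nlinarith [mul_nonneg ha0 ht0]
  have h2' : (a * (s + t)) ^ 2 ≤ (2 * F) ^ 2 := by nlinarith [sq_nonneg (s - t)]
  have h3' : a * (s + t) ≤ 2 * F := by
    have := Real.sqrt_le_sqrt h2'
    rwa [Real.sqrt_sq (mul_nonneg ha0 (by linarith)), Real.sqrt_sq (by linarith)] at this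
  linarith

/-- For `‖X‖_F ≤ 1`, `‖X'‖_F ≤ 1` and the augmentations `X̃ = [[X,0],[0,1]]`,
`X̃' = [[X',0],[0,1]]`, one has `‖X - X'‖_F ≤ 2 ‖X̃/‖X̃‖_F - X̃'/‖X̃'‖_F‖_F`. -/
theorem frob_diff_le_normalized_augmented (n₁ n₂ : ℕ)
    (X X' : Matrix (Fin n₁) (Fin n₂) ℝ)
    (hX : frob X ≤ 1) (hX' : frob X' ≤ 1)
    (Xtil Xtil' : Matrix (Fin n₁ ⊕ Fin 1) (Fin n₂ ⊕ Fin 1) ℝ)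
    (h1 : Xtil = Matrix.fromBlocks X 0 0 (1 : Matrix (Fin 1) (Fin 1) ℝ))
    (h2 : Xtil' = Matrix.fromBlocks X' 0 0 (1 : Matrix (Fin 1) (Fin 1) ℝ)) :
    frob (X - X') ≤ 2 * frob ((frob Xtil)⁻¹ • Xtil - (frob Xtil')⁻¹ • Xtil') := by
  have hX0 := frob_nonneg X
  have hX'0 := frob_nonneg X'
  set a : ℝ := frob Xtil with ha
  set b : ℝ := frob Xtil' with hb
  have ha2 : a ^ 2 = frob X ^ 2 + 1 := by
    rw [ha, h1, frob_fromBlocks_sq, frob_one_one]; ring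
  have hb2 : b ^ 2 = frob X' ^ 2 + 1 := by
    rw [hb, h2, frob_fromBlocks_sq, frob_one_one]; ring
  have ha0 : 0 ≤ a := frob_nonneg _
  have hb0 : 0 ≤ b := frob_nonneg _
  have ha1 : 1 ≤ a := by nlinarith
  have hb1 : 1 ≤ b := by nlinarith
  have haU : a ^ 2 ≤ 2 := by nlinarith
  have hap : 0 < a := by linarith
  have hbp : 0 < b := by linarith
  set s : ℝ := frob (a⁻¹ • X - b⁻¹ • X') with hs
  set t : ℝ := |a⁻¹ - b⁻¹| with ht
  have hs0 : 0 ≤ s := frob_nonneg _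
  have ht0 : 0 ≤ t := abs_nonneg _
  -- block structure of the normalized difference
  have hblk : a⁻¹ • Xtil - b⁻¹ • Xtil' =
      Matrix.fromBlocks (a⁻¹ • X - b⁻¹ • X') 0 0
        ((a⁻¹ - b⁻¹) • (1 : Matrix (Fin 1) (Fin 1) ℝ)) := by
    rw [h1, h2]
    ext (i | i) (j | j) <;>
      simp [Matrix.fromBlocks, Matrix.one_apply, sub_smul, Matrix.sub_apply]
  set F : ℝ := frob (a⁻¹ • Xtil - b⁻¹ • Xtil') with hF
  have hF0 : 0 ≤ F := frob_nonneg _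
  have hF2 : F ^ 2 = s ^ 2 + t ^ 2 := by
    rw [hF, hblk, frob_fromBlocks_sq, frob_smul, frob_one_one, mul_one, hs, ht, sq_abs]
  -- decomposition
  have hdecomp : X - X' = a • (a⁻¹ • X - b⁻¹ • X') + (a * (b⁻¹ - a⁻¹)) • X' := by
    match_scalars <;> field_simp <;> ring
  have htri : frob (X - X') ≤ a * s + a * t * frob X' := by
    calc frob (X - X') = frob (a • (a⁻¹ • X - b⁻¹ • X') + (a * (b⁻¹ - a⁻¹)) • X') := by
          rw [← hdecomp]
      _ ≤ frob (a • (a⁻¹ • X - b⁻¹ • X')) + frob ((a * (b⁻¹ - a⁻¹)) • X') :=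
          frob_add_le _ _
      _ = a * s + a * t * frob X' := by
          rw [frob_smul, frob_smul, abs_mul, abs_of_pos hap, hs, ht, abs_sub_comm]
  have hkey : a * s + a * t * frob X' ≤ 2 * F :=
    arith_key a s t (frob X') F ha0 haU hs0 ht0 hX'0 hX' hF0 hF2
  linarith
end
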